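/- Let H be a real Hilbert space and let T : H → H be a strongly nonexpansive operator with Fix(T) ≠ ∅. Then T is asymptotically regular, i.e. for every x ∈ H, ‖T^{n+1}x − T^n x‖ → 0 as n → ∞. -/

import Mathlib

open Filter Topology RealInnerProductSpace

variable {H : Type*} [NormedAddCommGroup H] [InnerProductSpace ℝ H] [CompleteSpace H]

/-- Weak convergence in a Hilbert space: `x n ⇀ p`. -/
def WeakConvergesTo (x : ℕ → H) (p : H) : Prop :=
  ∀ y : H, Tendsto (fun n => ⟪x n, y⟫) atTop (𝓝 ⟪p, y⟫)

/-- `compSeq n g = g (n-1) ∘ ⋯ ∘ g 0` (the identity when `n = 0`). -/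
def compSeq {α : Type*} : ℕ → (ℕ → α → α) → (α → α)
  | 0, _ => id
  | n + 1, g => g n ∘ compSeq n g

/-- `P` is the metric projection onto `C`. -/
def IsProjOn (C : Set H) (P : H → H) : Prop :=
  ∀ x, P x ∈ C ∧ ∀ y ∈ C, ‖x - P x‖ ≤ ‖x - y‖

/-- Nonexpansive operator. -/
def Nonexpansive (T : H → H) : Prop := ∀ x y, ‖T x - T y‖ ≤ ‖x - y‖

/-- Condition (S). -/
def CondS (T : H → H) : Prop :=
  ∀ x y : ℕ → H, (∃ c, ∀ n, ‖x n - y n‖ ≤ c) →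
    Tendsto (fun n => ‖x n - y n‖ - ‖T (x n) - T (y n)‖) atTop (𝓝 0) →
    Tendsto (fun n => x n - y n - (T (x n) - T (y n))) atTop (𝓝 (0 : H))

/-- Strongly nonexpansive operator. -/
def StronglyNonexpansive (T : H → H) : Prop := Nonexpansive T ∧ CondS T

/-- Firmly nonexpansive operator. -/
def FirmlyNonexpansive (T : H → H) : Prop :=
  ∀ x y, ‖T x - T y‖ ^ 2 ≤ ⟪T x - T y, x - y⟫

/-- Averaged operator. -/
def Averaged (T : H → H) : Prop :=
  ∃ lam ∈ Set.Ioo (0 : ℝ) 1, ∃ U : H → H, Nonexpansive U ∧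
    T = fun x => (1 - lam) • x + lam • U x

/-- The unrestricted `r`-set Douglas–Rachford operators `S n` associated with projections
`proj i` onto the sets `C i`, indices chosen by `f`: `S n = 2⁻¹ (Id + R_{C_{f((r-1)n+r-1)}} ∘ ⋯ ∘ R_{C_{f((r-1)n)}})`. -/
noncomputable def drS (proj : ℕ → H → H) (r : ℕ) (f : ℕ → ℕ) (n : ℕ) : H → H :=
  fun x => (2⁻¹ : ℝ) • (x + compSeq r (fun j y => (2 : ℝ) • proj (f ((r - 1) * n + j)) y - y) x)

/-- Lemma 1.17: a strongly nonexpansive operator with a fixed point is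
asymptotically regular. -/
theorem stmt17
    (T : H → H) (hT : StronglyNonexpansive T) (hfix : ∃ z, T z = z) :
    ∀ x : H, Tendsto (fun n => ‖T^[n + 1] x - T^[n] x‖) atTop (𝓝 0) := by
  obtain ⟨hNE, hS⟩ := hT
  obtain ⟨z, hz⟩ := hfix
  intro x
  set a : ℕ → ℝ := fun n => ‖T^[n] x - z‖ with ha
  have hanti : Antitone a := by
    apply antitone_nat_of_succ_le
    intro n
    have := hNE (T^[n] x) z
    rw [hz] at this
    simpa [ha, Function.iterate_succ_apply'] using this
  have hbdd : BddBelow (Set.range a) :=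
    ⟨0, by rintro _ ⟨n, rfl⟩; exact norm_nonneg _⟩
  have hconv : Tendsto a atTop (𝓝 (⨅ n, a n)) :=
    tendsto_atTop_ciInf hanti hbdd
  have hdiff : Tendsto (fun n => a n - a (n + 1)) atTop (𝓝 0) := by
    have := hconv.sub (hconv.comp (tendsto_add_atTop_nat 1))
    simpa using this
  have key := hS (fun n => T^[n] x) (fun _ => z)
    ⟨‖x - z‖, fun n => by simpa [ha] using hanti (Nat.zero_le n)⟩
    (by
      refine hdiff.congr (fun n => ?_)
      simp [ha, hz, Function.iterate_succ_apply'])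
  have key2 : Tendsto (fun n => T^[n] x - T^[n + 1] x) atTop (𝓝 (0 : H)) := by
    refine key.congr (fun n => ?_)
    simp [hz, Function.iterate_succ_apply']
  have := (continuous_norm.tendsto (0 : H)).comp key2
  simpa [norm_sub_rev, Function.comp_def] using this
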